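/- For every r > 0 and every symmetric matrices Γ ⪰ 0 and Σ ≻ 0 in ℝ^{n×n}, and any A ∈ ℝ^{n×n}, the ellipsoid 𝔹(AΓAᵀ + Σ, r) is contained in the Minkowski sum A·𝔹(Γ, r) + 𝔹(Σ, r). -/

import Mathlib

open Matrix Pointwise

/-- The positive semidefinite square root of a positive semidefinite matrix, as defined in
Mathlib (December 2024) under this name; it has since been removed from Mathlib. -/
noncomputable def Matrix.PosSemidef.sqrt {n : Type*} [Fintype n] [DecidableEq n]
    {A : Matrix n n ℝ} (hA : A.PosSemidef) : Matrix n n ℝ :=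
  hA.1.eigenvectorUnitary.1 * diagonal ((↑) ∘ (√·) ∘ hA.1.eigenvalues) *
    (star hA.1.eigenvectorUnitary : Matrix n n ℝ)

theorem Matrix.PosSemidef.sqrt_mul_self {n : Type*} [Fintype n] [DecidableEq n]
    {A : Matrix n n ℝ} (hA : A.PosSemidef) : hA.sqrt * hA.sqrt = A := by
  unfold Matrix.PosSemidef.sqrt
  conv_rhs => rw [hA.1.spectral_theorem, Unitary.conjStarAlgAut_apply]
  set U : Matrix n n ℝ := hA.1.eigenvectorUnitary.1
  have hU : (star hA.1.eigenvectorUnitary : Matrix n n ℝ) * U = 1 := by simp [U]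
  set V : Matrix n n ℝ := (star hA.1.eigenvectorUnitary : Matrix n n ℝ)
  set D : Matrix n n ℝ := diagonal ((↑) ∘ (√·) ∘ hA.1.eigenvalues)
  have hD : D * D = diagonal (RCLike.ofReal ∘ hA.1.eigenvalues) := by
    simp only [D, diagonal_mul_diagonal]
    congr 1
    funext i
    simp [Real.mul_self_sqrt (hA.eigenvalues_nonneg i)]
  calc U * D * V * (U * D * V) = U * (D * (V * U) * D) * V := by simp only [mul_assoc]
    _ = _ := by rw [hU, mul_one, hD]

theorem Matrix.PosSemidef.posSemidef_sqrt {n : Type*} [Fintype n] [DecidableEq n]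
    {A : Matrix n n ℝ} (hA : A.PosSemidef) : hA.sqrt.PosSemidef := by
  unfold Matrix.PosSemidef.sqrt
  have h := (posSemidef_diagonal_iff (d := ((↑) ∘ (√·) ∘ hA.1.eigenvalues : n → ℝ))).mpr
    (fun i => by simp [Real.sqrt_nonneg])
  simpa [star_eq_conjTranspose] using h.mul_mul_conjTranspose_same
    (hA.1.eigenvectorUnitary.1)

/-- The ellipsoid `𝔹(Γ, r) = {x = Γ^{1/2} z : zᵀ z ≤ r}` for a PSD matrix `Γ`. -/
noncomputable def ball {n : ℕ} (Γ : Matrix (Fin n) (Fin n) ℝ)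
    (hΓ : Γ.PosSemidef) (r : ℝ) : Set (Fin n → ℝ) :=
  {x | ∃ z : Fin n → ℝ, x = hΓ.sqrt *ᵥ z ∧ z ⬝ᵥ z ≤ r}

private lemma dp_aux {n : ℕ} (M : Matrix (Fin n) (Fin n) ℝ) (a b : Fin n → ℝ) :
    (M *ᵥ a) ⬝ᵥ b = a ⬝ᵥ (Mᵀ *ᵥ b) := by
  rw [dotProduct_comm, Matrix.dotProduct_mulVec, ← Matrix.mulVec_transpose,
    dotProduct_comm]

private lemma dp_self_nonneg {n : ℕ} (a : Fin n → ℝ) : 0 ≤ a ⬝ᵥ a :=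
  Finset.sum_nonneg fun _ _ => mul_self_nonneg _

/-- `𝔹(AΓAᵀ + Σ, r) ⊆ A·𝔹(Γ, r) + 𝔹(Σ, r)`. -/
theorem stmt_0 {n : ℕ} (A Γ Sig : Matrix (Fin n) (Fin n) ℝ)
    (hΓ : Γ.PosSemidef) (hSig : Sig.PosDef) (r : ℝ) (hr : 0 < r)
    (hsum : (A * Γ * Aᵀ + Sig).PosSemidef) :
    ball (A * Γ * Aᵀ + Sig) hsum r ⊆
      (A *ᵥ ·) '' ball Γ hΓ r + ball Sig hSig.posSemidef r := by
  have hAΓA : (A * Γ * Aᵀ).PosSemidef := by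
    simpa using hΓ.mul_mul_conjTranspose_same A
  have hS : (A * Γ * Aᵀ + Sig).PosDef := Matrix.PosDef.posSemidef_add hAΓA hSig
  have hdetS : IsUnit (A * Γ * Aᵀ + Sig).det :=
    (Matrix.isUnit_iff_isUnit_det _).1 hS.isUnit
  have h2 : hsum.sqrt * hsum.sqrt = A * Γ * Aᵀ + Sig := hsum.sqrt_mul_self
  have hdetsq : IsUnit hsum.sqrt.det := by
    have : IsUnit (hsum.sqrt.det * hsum.sqrt.det) := by
      rw [← Matrix.det_mul, h2]; exact hdetS
    exact isUnit_of_mul_isUnit_left this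
  have hsqΓ : hΓ.sqrtᵀ = hΓ.sqrt := hΓ.posSemidef_sqrt.isHermitian.eq
  have hsqS : hsum.sqrtᵀ = hsum.sqrt := hsum.posSemidef_sqrt.isHermitian.eq
  have hsqSig : hSig.posSemidef.sqrtᵀ = hSig.posSemidef.sqrt :=
    hSig.posSemidef.posSemidef_sqrt.isHermitian.eq
  have hkey : hsum.sqrt * (A * Γ * Aᵀ + Sig)⁻¹ * hsum.sqrt = 1 := by
    calc hsum.sqrt * (A * Γ * Aᵀ + Sig)⁻¹ * hsum.sqrt
        = hsum.sqrt * (hsum.sqrt * hsum.sqrt)⁻¹ * hsum.sqrt := by rw [h2]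
      _ = 1 := by
          rw [Matrix.mul_inv_rev, ← mul_assoc,
            Matrix.mul_nonsing_inv _ hdetsq, one_mul,
            Matrix.nonsing_inv_mul _ hdetsq]
  rintro x ⟨z, rfl, hz⟩
  obtain ⟨y, hy⟩ : ∃ y, y = (A * Γ * Aᵀ + Sig)⁻¹ *ᵥ (hsum.sqrt *ᵥ z) := ⟨_, rfl⟩
  -- facts about y; afterwards we never unfold y again
  have hSyx : (A * Γ * Aᵀ + Sig) *ᵥ y = hsum.sqrt *ᵥ z := by
    rw [hy, Matrix.mulVec_mulVec, Matrix.mul_nonsing_inv _ hdetS, Matrix.one_mulVec]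
  have hyx0 : y ⬝ᵥ (hsum.sqrt *ᵥ z) = z ⬝ᵥ z := by
    rw [hy, dotProduct_comm, dp_aux, hsqS, Matrix.mulVec_mulVec,
      Matrix.mulVec_mulVec, hkey, Matrix.one_mulVec]
  clear hy
  obtain ⟨u, hu⟩ : ∃ u, u = hΓ.sqrt *ᵥ (Aᵀ *ᵥ y) := ⟨_, rfl⟩
  obtain ⟨v, hv⟩ : ∃ v, v = hSig.posSemidef.sqrt *ᵥ y := ⟨_, rfl⟩
  have huu : u ⬝ᵥ u = y ⬝ᵥ ((A * Γ * Aᵀ) *ᵥ y) := by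
    calc u ⬝ᵥ u = (Aᵀ *ᵥ y) ⬝ᵥ (hΓ.sqrtᵀ *ᵥ u) := by rw [hu, dp_aux]
      _ = (Aᵀ *ᵥ y) ⬝ᵥ ((hΓ.sqrt * hΓ.sqrt) *ᵥ (Aᵀ *ᵥ y)) := by
          rw [hsqΓ, hu, Matrix.mulVec_mulVec]
      _ = y ⬝ᵥ ((A * Γ * Aᵀ) *ᵥ y) := by
          rw [hΓ.sqrt_mul_self, dp_aux, Matrix.transpose_transpose,
            Matrix.mulVec_mulVec, Matrix.mulVec_mulVec]
  have hvv : v ⬝ᵥ v = y ⬝ᵥ (Sig *ᵥ y) := by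
    calc v ⬝ᵥ v = y ⬝ᵥ (hSig.posSemidef.sqrtᵀ *ᵥ v) := by rw [hv, dp_aux]
      _ = y ⬝ᵥ ((hSig.posSemidef.sqrt * hSig.posSemidef.sqrt) *ᵥ y) := by
          rw [hsqSig, hv, Matrix.mulVec_mulVec]
      _ = y ⬝ᵥ (Sig *ᵥ y) := by rw [hSig.posSemidef.sqrt_mul_self]
  have hsumuv : u ⬝ᵥ u + v ⬝ᵥ v = z ⬝ᵥ z := by
    rw [huu, hvv, ← dotProduct_add, ← Matrix.add_mulVec, hSyx, hyx0]
  have hur : u ⬝ᵥ u ≤ r := le_trans (by linarith [dp_self_nonneg v]) hz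
  have hvr : v ⬝ᵥ v ≤ r := le_trans (by linarith [dp_self_nonneg u]) hz
  have h1 : A *ᵥ (hΓ.sqrt *ᵥ u) = (A * Γ * Aᵀ) *ᵥ y := by
    rw [hu]
    simp only [Matrix.mulVec_mulVec, ← mul_assoc]
    rw [mul_assoc A, hΓ.sqrt_mul_self]
  have h2' : hSig.posSemidef.sqrt *ᵥ v = Sig *ᵥ y := by
    rw [hv, Matrix.mulVec_mulVec, hSig.posSemidef.sqrt_mul_self]
  have hdecomp : hsum.sqrt *ᵥ z = A *ᵥ (hΓ.sqrt *ᵥ u) + hSig.posSemidef.sqrt *ᵥ v := by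
    rw [h1, h2', ← Matrix.add_mulVec, hSyx]
  rw [hdecomp]
  exact Set.add_mem_add ⟨hΓ.sqrt *ᵥ u, ⟨u, rfl, hur⟩, rfl⟩ ⟨v, rfl, hvr⟩
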